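/- Let α ∈ {0, 1, −1}. For each integer n define the vector field on ℝ² (coordinates (t,x)): L_n = e^{-nt} ∂_t + e^{-nt} [ n + (1/2) n(n−1) α e^{-x} ] ∂_x. Then for all integers m, n one has [L_m, L_n] = (m − n) L_{m+n}. (Realization 𝔚₂ of the Witt algebra from Theorem 1.) -/

import Mathlib

noncomputable section

/-- Partial derivative of `f : ℝ² → ℝ` (curried) in the first variable `t`. -/
def qt (f : ℝ → ℝ → ℝ) (t x : ℝ) : ℝ := deriv (fun s => f s x) t

/-- Partial derivative in the second variable `x`. -/
def qx (f : ℝ → ℝ → ℝ) (t x : ℝ) : ℝ := deriv (fun s => f t s) x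

/-- A vector field `τ ∂_t + ξ ∂_x` on ℝ² with coordinates `(t,x)`. -/
structure VF2 where
  tau : ℝ → ℝ → ℝ
  xi  : ℝ → ℝ → ℝ

/-- Action of a vector field on a function: `X(F) = τ F_t + ξ F_x`. -/
def VF2.app (X : VF2) (F : ℝ → ℝ → ℝ) (t x : ℝ) : ℝ :=
  X.tau t x * qt F t x + X.xi t x * qx F t x

/-- Lie bracket of vector fields on ℝ². -/
def VF2.bracket (X Y : VF2) : VF2 where
  tau := fun t x => X.app Y.tau t x - Y.app X.tau t x
  xi  := fun t x => X.app Y.xi t x - Y.app X.xi t x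

/-- Scalar multiple of a vector field. -/
def VF2.smul (c : ℝ) (X : VF2) : VF2 where
  tau := fun t x => c * X.tau t x
  xi  := fun t x => c * X.xi t x

/-- The vector fields of the realization 𝔚₂:
`L n = e^{-nt} ∂_t + e^{-nt}[n + (1/2) n (n-1) α e^{-x}] ∂_x`. -/
def W2 (α : ℝ) (n : ℤ) : VF2 where
  tau := fun t _ => Real.exp (-(n : ℝ) * t)
  xi  := fun t x => Real.exp (-(n : ℝ) * t) *
    ((n : ℝ) + (1 / 2) * (n : ℝ) * ((n : ℝ) - 1) * α * Real.exp (-x))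

/-- Realization 𝔚₂ of the Witt algebra: `[L m, L n] = (m - n) L (m + n)`. -/

lemma deriv_exp_mul (c t : ℝ) : deriv (fun s => Real.exp (c * s)) t = c * Real.exp (c * t) := by
  have h : HasDerivAt (fun s => Real.exp (c * s)) (Real.exp (c * t) * c) t := by
    simpa using ((hasDerivAt_id t).const_mul c).exp
  rw [h.deriv]; ring

lemma deriv_aux (a b d x : ℝ) :
    deriv (fun s => a * (b + d * Real.exp (-s))) x = a * (d * (-Real.exp (-x))) := by
  have h : HasDerivAt (fun s => a * (b + d * Real.exp (-s)))
      (a * (0 + d * (Real.exp (-x) * (-1)))) x := by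
    simpa using ((((hasDerivAt_id x).neg.exp).const_mul d).const_add b).const_mul a
  rw [h.deriv]; ring

theorem witt_realization_W2 (α : ℝ) (hα : α = 0 ∨ α = 1 ∨ α = -1) (m n : ℤ) :
    VF2.bracket (W2 α m) (W2 α n) = VF2.smul ((m : ℝ) - (n : ℝ)) (W2 α (m + n)) := by
  unfold VF2.bracket VF2.smul VF2.app W2 qt qx
  simp only [VF2.mk.injEq]
  have key : ∀ (t : ℝ) (k : ℤ),
      deriv (fun s => Real.exp (-(k : ℝ) * s)) t = -(k : ℝ) * Real.exp (-(k : ℝ) * t) :=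
    fun t k => deriv_exp_mul (-(k : ℝ)) t
  constructor <;> funext t x
  · simp only [key, deriv_const]
    have h := Real.exp_add (-(m : ℝ) * t) (-(n : ℝ) * t)
    push_cast
    rw [show (-((m:ℝ)+(n:ℝ)) * t) = (-(m:ℝ)*t) + (-(n:ℝ)*t) by ring, h]
    ring
  · have hdt : ∀ (k j : ℤ),
        deriv (fun s => Real.exp (-(k : ℝ) * s) *
          ((k : ℝ) + 1/2 * (k:ℝ) * ((k:ℝ)-1) * α * Real.exp (-x))) t
        = (-(k : ℝ) * Real.exp (-(k : ℝ) * t)) *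
          ((k : ℝ) + 1/2 * (k:ℝ) * ((k:ℝ)-1) * α * Real.exp (-x)) := by
      intro k j
      have h : HasDerivAt (fun s => Real.exp (-(k : ℝ) * s) *
          ((k : ℝ) + 1/2 * (k:ℝ) * ((k:ℝ)-1) * α * Real.exp (-x)))
          ((Real.exp (-(k:ℝ)*t) * (-(k:ℝ))) * ((k : ℝ) + 1/2 * (k:ℝ) * ((k:ℝ)-1) * α * Real.exp (-x))) t := by
        have h0 := ((((hasDerivAt_id t).const_mul (-(k:ℝ))).exp).mul_const
          ((k : ℝ) + 1/2 * (k:ℝ) * ((k:ℝ)-1) * α * Real.exp (-x)))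
        simp only [id] at h0
        exact h0.congr_deriv (by ring)
      rw [h.deriv]; ring
    have hdx : ∀ (k : ℤ),
        deriv (fun s => Real.exp (-(k : ℝ) * t) *
          ((k : ℝ) + 1/2 * (k:ℝ) * ((k:ℝ)-1) * α * Real.exp (-s))) x
        = Real.exp (-(k : ℝ) * t) * (1/2 * (k:ℝ) * ((k:ℝ)-1) * α * (-Real.exp (-x))) :=
      fun k => deriv_aux _ _ _ x
    simp only [key, hdt 0, hdx]
    rw [hdt m 0, hdt n 0]
    have h := Real.exp_add (-(m : ℝ) * t) (-(n : ℝ) * t)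
    push_cast
    rw [show (-((m:ℝ)+(n:ℝ)) * t) = (-(m:ℝ)*t) + (-(n:ℝ)*t) by ring, h]
    ring
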